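/- Let A be quasinormal (A commutes with A*A) and B be normal, with AB = λBA ≠ 0 for λ ∈ ℂ with |λ| = 1. Then AB is quasinormal, i.e., (AB)((AB)*(AB)) = ((AB)*(AB))(AB). -/

import Mathlib

open NormedSpace

section Fuglede

variable {𝔸 : Type*} [NormedRing 𝔸] [StarRing 𝔸] [CStarRing 𝔸] [NormedAlgebra ℂ 𝔸]
  [CompleteSpace 𝔸] [StarModule ℂ 𝔸]

noncomputable instance : NormedAlgebra ℚ 𝔸 := .restrictScalars ℚ ℂ 𝔸

lemma pow_mul_comm_of_mul_comm {M N X : 𝔸} (h : M * X = X * N) :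
    ∀ n : ℕ, M ^ n * X = X * N ^ n := by
  intro n
  induction n with
  | zero => simp
  | succ k ih =>
    rw [pow_succ, pow_succ, mul_assoc, h, ← mul_assoc, ih, mul_assoc]

lemma exp_smul_mul_comm {M N X : 𝔸} (h : M * X = X * N) (z : ℂ) :
    exp (z • M) * X = X * exp (z • N) := by
  simp only [exp_eq_tsum ℂ]
  haveI : ContinuousSMul ℚ ℂ := NormedSpace.toIsBoundedSMul.continuousSMul
  rw [← Summable.tsum_mul_right X (NormedSpace.expSeries_summable' (𝕂 := ℂ) (z • M)),
    ← Summable.tsum_mul_left X (NormedSpace.expSeries_summable' (𝕂 := ℂ) (z • N))]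
  congr 1
  funext n
  rw [smul_mul_assoc, mul_smul_comm, smul_pow, smul_pow, smul_mul_assoc, mul_smul_comm,
    pow_mul_comm_of_mul_comm h n]

lemma exp_skew_mem_unitary {S : 𝔸} (hS : star S = -S) : exp S ∈ unitary 𝔸 :=
  exp_mem_unitary_of_mem_skewAdjoint (by simpa [skewAdjoint.mem_iff] using hS)

/-- Fuglede–Putnam theorem in a C*-algebra. -/
lemma fuglede_putnam [Nontrivial 𝔸] {M N X : 𝔸}
    (hM : star M * M = M * star M) (hN : star N * N = N * star N)
    (h : M * X = X * N) : star M * X = X * star N := by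
  set F : ℂ → 𝔸 := fun z => exp (z • star M) * X * exp (-(z • star N)) with hF
  -- F z = U * X * V with U, V unitary, so ‖F z‖ = ‖X‖.
  have hFeq : ∀ z : ℂ,
      F z = exp (z • star M - (starRingEnd ℂ z) • M) * X *
        exp ((starRingEnd ℂ z) • N - z • star N) := by
    intro z
    set w := starRingEnd ℂ z
    have hcM : Commute (star M) M := hM
    have hcN : Commute N (star N) := (hN : Commute (star N) N).symm
    have cM : Commute (z • star M) (-(w • M)) := ((hcM.smul_left z).smul_right w).neg_right
    have cN : Commute (w • N) (-(z • star N)) := ((hcN.smul_left w).smul_right z).neg_right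
    have e1 : exp (z • star M - w • M) = exp (z • star M) * exp (-(w • M)) := by
      rw [sub_eq_add_neg, exp_add_of_commute cM]
    have e2 : exp (w • N - z • star N) = exp (w • N) * exp (-(z • star N)) := by
      rw [sub_eq_add_neg, exp_add_of_commute cN]
    have e3 : exp (-(w • M)) * X = X * exp (-(w • N)) := by
      simpa [neg_smul] using exp_smul_mul_comm h (-w)
    have e4 : exp (-(w • N)) * exp (w • N) = 1 := by
      rw [← exp_add_of_commute (Commute.refl (w • N)).neg_left, neg_add_cancel, exp_zero]
    rw [e1, e2]
    symm
    calc exp (z • star M) * exp (-(w • M)) * X * (exp (w • N) * exp (-(z • star N)))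
        = exp (z • star M) * (((exp (-(w • M)) * X) * exp (w • N)) * exp (-(z • star N))) := by
          simp only [mul_assoc]
      _ = exp (z • star M) * ((X * (exp (-(w • N)) * exp (w • N))) * exp (-(z • star N))) := by
          rw [e3]; simp only [mul_assoc]
      _ = F z := by rw [e4, hF]; simp only [mul_one]; simp only [mul_assoc]
  have hnorm : ∀ z : ℂ, ‖F z‖ = ‖X‖ := by
    intro z
    rw [hFeq z]
    have hU : exp (z • star M - (starRingEnd ℂ z) • M) ∈ unitary 𝔸 := by
      apply exp_skew_mem_unitary
      simp [star_sub, star_smul, neg_sub]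
    have hV : exp ((starRingEnd ℂ z) • N - z • star N) ∈ unitary 𝔸 := by
      apply exp_skew_mem_unitary
      simp [star_sub, star_smul, neg_sub]
    rw [mul_assoc, CStarRing.norm_mem_unitary_mul _ hU, CStarRing.norm_mul_mem_unitary _ hV]
  have hdiff : Differentiable ℂ F := by
    have d1 : Differentiable ℂ fun z : ℂ => exp (z • star M) := fun z =>
      (hasDerivAt_exp_smul_const (star M) z).differentiableAt
    have d2 : Differentiable ℂ fun z : ℂ => exp (-(z • star N)) := by
      have heq : (fun z : ℂ => exp (-(z • star N)))
          = (fun u : ℂ => exp (u • star N)) ∘ Neg.neg := by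
        funext u; simp [Function.comp, neg_smul]
      rw [heq]
      exact fun z => ((hasDerivAt_exp_smul_const (𝕂 := ℂ) (star N) (-z)).scomp z
        (hasDerivAt_neg z)).differentiableAt
    exact (d1.mul_const X).mul d2
  have hbd : Bornology.IsBounded (Set.range F) := by
    rw [Metric.isBounded_iff_subset_closedBall 0]
    refine ⟨‖X‖, ?_⟩
    rintro _ ⟨z, rfl⟩
    simp [Metric.mem_closedBall, hnorm z]
  have hconst : ∀ z : ℂ, F z = F 0 := fun z =>
    hdiff.apply_eq_apply_of_bounded hbd z 0
  have hF0 : F 0 = X := by simp [hF]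
  have key : ∀ z : ℂ, exp (z • star M) * X = X * exp (z • star N) := by
    intro z
    have e4 : exp (-(z • star N)) * exp (z • star N) = 1 := by
      rw [← exp_add_of_commute (Commute.refl (z • star N)).neg_left, neg_add_cancel, exp_zero]
    have := congrArg (· * exp (z • star N)) ((hconst z).trans hF0)
    simpa [hF, mul_assoc, e4] using this
  -- differentiate at 0
  have g1 : HasDerivAt (fun z : ℂ => exp (z • star M) * X)
      (exp ((0 : ℂ) • star M) * star M * X) 0 :=
    (hasDerivAt_exp_smul_const (star M) (0 : ℂ)).mul_const X
  have g2 : HasDerivAt (fun z : ℂ => X * exp (z • star N))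
      (X * (exp ((0 : ℂ) • star N) * star N)) 0 :=
    (hasDerivAt_exp_smul_const (star N) (0 : ℂ)).const_mul X
  have g1' : HasDerivAt (fun z : ℂ => exp (z • star M) * X)
      (X * (exp ((0 : ℂ) • star N) * star N)) 0 := by
    have : (fun z : ℂ => exp (z • star M) * X) = fun z : ℂ => X * exp (z • star N) :=
      funext key
    rw [this]; exact g2
  have := g1.unique g1'
  simpa using this

end Fuglede

theorem lambda_commute_quasinormal_mul
    {H : Type*} [NormedAddCommGroup H] [InnerProductSpace ℂ H] [CompleteSpace H]
    (A B : H →L[ℂ] H) (lam : ℂ)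
    (hA : A * (ContinuousLinearMap.adjoint A * A) = (ContinuousLinearMap.adjoint A * A) * A)
    (hB : ContinuousLinearMap.adjoint B * B = B * ContinuousLinearMap.adjoint B)
    (hcomm : A * B = lam • (B * A)) (hne : A * B ≠ 0) (hlam : ‖lam‖ = 1) :
    (A * B) * (ContinuousLinearMap.adjoint (A * B) * (A * B)) =
      (ContinuousLinearMap.adjoint (A * B) * (A * B)) * (A * B) := by
  haveI : Nontrivial (H →L[ℂ] H) := ⟨⟨A * B, 0, hne⟩⟩
  rw [← ContinuousLinearMap.star_eq_adjoint] at hA hB ⊢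
  have hlam1 : lam * starRingEnd ℂ lam = 1 := by
    rw [Complex.mul_conj]
    norm_cast
    rw [Complex.normSq_eq_norm_sq]
    simp [hlam]
  have hlam1' : starRingEnd ℂ lam * lam = 1 := by rwa [mul_comm] at hlam1
  -- Fuglede–Putnam applied with M = lam • B, N = B, X = A.
  have hMnormal : star (lam • B) * (lam • B) = (lam • B) * star (lam • B) := by
    simp only [star_smul, smul_mul_assoc, mul_smul_comm, smul_smul, hB]
    rw [mul_comm lam (star lam)]
  have hMX : (lam • B) * A = A * B := by rw [smul_mul_assoc, hcomm]
  have hfp : star (lam • B) * A = A * star B := fuglede_putnam hMnormal hB hMX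
  -- h1 : A * star B = conj lam • (star B * A)
  have h1 : A * star B = (starRingEnd ℂ lam) • (star B * A) := by
    rw [← hfp, star_smul, smul_mul_assoc, starRingEnd_apply]
  -- h2 : B * star A = lam • (star A * B)
  have h2 : B * star A = lam • (star A * B) := by
    have := congrArg star h1
    simp only [star_mul, star_star, star_smul, Complex.conj_conj, starRingEnd_apply] at this
    simpa [starRingEnd_apply] using this
  have hBA : B * A = (starRingEnd ℂ lam) • (A * B) := by
    rw [hcomm, smul_smul, hlam1', one_smul]
  have h1' : star B * A = lam • (A * star B) := by
    rw [h1, smul_smul, hlam1, one_smul]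
  have hA'B : star A * B = (starRingEnd ℂ lam) • (B * star A) := by
    rw [h2, smul_smul, hlam1', one_smul]
  have cQA : Commute (star B * B) A := by
    show star B * B * A = A * (star B * B)
    calc star B * B * A = star B * (B * A) := by rw [mul_assoc]
      _ = star B * ((starRingEnd ℂ lam) • (A * B)) := by rw [hBA]
      _ = (starRingEnd ℂ lam) • ((star B * A) * B) := by rw [mul_smul_comm, mul_assoc]
      _ = (starRingEnd ℂ lam) • ((lam • (A * star B)) * B) := by rw [h1']
      _ = A * (star B * B) := by
          rw [smul_mul_assoc, smul_smul, hlam1', one_smul, mul_assoc]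
  have cPB : Commute (star A * A) B := by
    show star A * A * B = B * (star A * A)
    calc star A * A * B = star A * (A * B) := by rw [mul_assoc]
      _ = star A * (lam • (B * A)) := by rw [hcomm]
      _ = lam • ((star A * B) * A) := by rw [mul_smul_comm, mul_assoc]
      _ = lam • (((starRingEnd ℂ lam) • (B * star A)) * A) := by rw [hA'B]
      _ = B * (star A * A) := by
          rw [smul_mul_assoc, smul_smul, hlam1, one_smul, mul_assoc]
  have cQB : Commute (star B * B) B := by
    show star B * B * B = B * (star B * B)
    conv_lhs => rw [hB]
    rw [mul_assoc]
  have cPA : Commute (star A * A) A := hA.symm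
  have hT : star (A * B) * (A * B) = (star B * B) * (star A * A) := by
    rw [star_mul]
    calc star B * star A * (A * B) = star B * ((star A * A) * B) := by
          simp only [mul_assoc]
      _ = star B * (B * (star A * A)) := by rw [cPB.eq]
      _ = (star B * B) * (star A * A) := by simp only [mul_assoc]
  rw [hT]
  exact ((cQA.mul_right cQB).mul_left (cPA.mul_right cPB)).symm.eq
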